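/- In the elliptical log-likelihood ℓ(θ) = -½ log|Σ| + log g(u) with u = z^⊤Σ^{-1}z and z = Y - μ(θ), the negative second partial derivative -∂²ℓ/∂θ_r∂θ_s evaluated with v = -2W_g(u) and v̇ = -2W_g'(u) equals T_{(r)}^⊤ Σ^{-1} d_{(s)} + tr(B_{(r)} A_{(s)}) + E_{(rs)}, where T_{(r)}^⊤ = -v̇ (z^⊤ A_{(r)} z) z^⊤ + 2 v̇ (d_{(r)}^⊤ Σ^{-1} z) z^⊤ + v d_{(r)}^⊤ + v z^⊤ Σ^{-1} C_{(r)}, B_{(r)} = -v̇ (d_{(r)}^⊤ Σ^{-1} z) z z^⊤ + ½ v̇ (z^⊤ A_{(r)} z) z z^⊤ - v z d_{(r)}^⊤ - ½ C_{(r)}, and E_{(rs)} = -½ tr[A_{(sr)}(Σ - v z z^⊤)] - v z^⊤ Σ^{-1} d_{(sr)}, with d_{(sr)} = ∂²μ/∂θ_s∂θ_r, A_{(r)} = -Σ^{-1}C_{(r)}Σ^{-1}, and A_{(sr)} = ∂A_{(s)}/∂θ_r. -/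

import Mathlib

open Matrix
attribute [local instance] Matrix.frobeniusNormedAddCommGroup Matrix.frobeniusNormedRing Matrix.frobeniusNormedSpace

namespace EllAux
variable {q : ℕ}

noncomputable def mEquiv (q : ℕ) : Matrix (Fin q) (Fin q) ℝ ≃L[ℝ] (Fin q → Fin q → ℝ) :=
  LinearEquiv.toContinuousLinearEquiv
    (LinearEquiv.refl ℝ (Matrix (Fin q) (Fin q) ℝ) : Matrix (Fin q) (Fin q) ℝ ≃ₗ[ℝ] (Fin q → Fin q → ℝ))

lemma hasDerivAt_matrix {A : ℝ → Matrix (Fin q) (Fin q) ℝ} {A' : Matrix (Fin q) (Fin q) ℝ} {t : ℝ} :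
    HasDerivAt A A' t ↔ ∀ i j, HasDerivAt (fun t => A t i j) (A' i j) t := by
  constructor
  · intro h
    have h2 : HasDerivAt (fun t => mEquiv q (A t)) (mEquiv q A') t :=
      ((mEquiv q).toContinuousLinearMap.hasFDerivAt.comp_hasDerivAt t h)
    intro i j
    exact hasDerivAt_pi.1 (hasDerivAt_pi.1 h2 i) j
  · intro h
    have h2 : HasDerivAt (fun t => mEquiv q (A t)) (mEquiv q A') t :=
      hasDerivAt_pi.2 fun i => hasDerivAt_pi.2 fun j => h i j
    have h3 := ((mEquiv q).symm.toContinuousLinearMap.hasFDerivAt.comp_hasDerivAt t h2)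
    simp at h3
    exact h3

lemma HasDerivAt.dotProd {f g : ℝ → Fin q → ℝ} {f' g' : Fin q → ℝ} {t : ℝ}
    (hf : HasDerivAt f f' t) (hg : HasDerivAt g g' t) :
    HasDerivAt (fun t => f t ⬝ᵥ g t) (f' ⬝ᵥ g t + f t ⬝ᵥ g') t := by
  have h := HasDerivAt.fun_sum (u := Finset.univ)
    (A := fun i t => f t i * g t i) (A' := fun i => f' i * g t i + f t i * g' i)
    (fun i _ => (hasDerivAt_pi.1 hf i).mul (hasDerivAt_pi.1 hg i))
  simpa [dotProduct, Finset.sum_add_distrib] using h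

lemma HasDerivAt.mulVecd {M : ℝ → Matrix (Fin q) (Fin q) ℝ} {M' : Matrix (Fin q) (Fin q) ℝ}
    {x : ℝ → Fin q → ℝ} {x' : Fin q → ℝ} {t : ℝ}
    (hM : HasDerivAt M M' t) (hx : HasDerivAt x x' t) :
    HasDerivAt (fun t => M t *ᵥ x t) (M' *ᵥ x t + M t *ᵥ x') t := by
  apply hasDerivAt_pi.2
  intro i
  have hMi : HasDerivAt (fun t => M t i) (M' i) t :=
    hasDerivAt_pi.2 fun j => hasDerivAt_matrix.1 hM i j
  simpa [Matrix.mulVec] using HasDerivAt.dotProd hMi hx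

lemma HasDerivAt.matMul {A B : ℝ → Matrix (Fin q) (Fin q) ℝ}
    {A' B' : Matrix (Fin q) (Fin q) ℝ} {t : ℝ}
    (hA : HasDerivAt A A' t) (hB : HasDerivAt B B' t) :
    HasDerivAt (fun t => A t * B t) (A' * B t + A t * B') t := by
  apply hasDerivAt_matrix.2
  intro i j
  have hAi : HasDerivAt (fun t => A t i) (A' i) t :=
    hasDerivAt_pi.2 fun k => hasDerivAt_matrix.1 hA i k
  have hBj : HasDerivAt (fun t k => B t k j) (fun k => B' k j) t :=
    hasDerivAt_pi.2 fun k => hasDerivAt_matrix.1 hB k j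
  simpa [Matrix.mul_apply, dotProduct] using HasDerivAt.dotProd hAi hBj

lemma HasDerivAt.traced {M : ℝ → Matrix (Fin q) (Fin q) ℝ} {M' : Matrix (Fin q) (Fin q) ℝ} {t : ℝ}
    (hM : HasDerivAt M M' t) :
    HasDerivAt (fun t => (M t).trace) M'.trace t := by
  simpa [Matrix.trace, Matrix.diag] using
    HasDerivAt.fun_sum (u := Finset.univ) (A := fun i t => M t i i) (A' := fun i => M' i i)
      (fun i _ => hasDerivAt_matrix.1 hM i i)

noncomputable local instance : NormedAlgebra ℝ (Matrix (Fin q) (Fin q) ℝ) :=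
  { (inferInstance : Algebra ℝ (Matrix (Fin q) (Fin q) ℝ)) with
    norm_smul_le := fun r x => norm_smul_le r x }

lemma hasDerivAt_inv_mat {A : ℝ → Matrix (Fin q) (Fin q) ℝ} {A' : Matrix (Fin q) (Fin q) ℝ} {t : ℝ}
    (hA : HasDerivAt A A' t) (hu : IsUnit (A t)) :
    HasDerivAt (fun t => (A t)⁻¹) (-((A t)⁻¹ * A' * (A t)⁻¹)) t := by
  obtain ⟨u, hu⟩ := hu
  have h1 := hasFDerivAt_ringInverse (𝕜 := ℝ) u
  rw [hu] at h1
  have h2 := h1.comp_hasDerivAt t hA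
  rw [show Ring.inverse ∘ A = fun t => (A t)⁻¹ from
    funext fun x => by simp [Function.comp, Matrix.nonsing_inv_eq_ringInverse]] at h2
  have e : -((A t)⁻¹ * A' * (A t)⁻¹) = (-((ContinuousLinearMap.mulLeftRight ℝ (Matrix (Fin q) (Fin q) ℝ)) ↑u⁻¹) ↑u⁻¹) A' := by
    simp [ContinuousLinearMap.mulLeftRight_apply, ← hu, ← Matrix.coe_units_inv,
      Matrix.mul_assoc]
  rw [e]
  exact h2

lemma hasDerivAt_det_one {A : ℝ → Matrix (Fin q) (Fin q) ℝ} {A' : Matrix (Fin q) (Fin q) ℝ} {t : ℝ}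
    (hA : HasDerivAt A A' t) (h1 : A t = 1) :
    HasDerivAt (fun t => (A t).det) A'.trace t := by
  have hσ : ∀ σ : Equiv.Perm (Fin q), HasDerivAt (fun t => ∏ i, A t (σ i) i)
      (∑ i, (∏ j ∈ Finset.univ.erase i, A t (σ j) j) • A' (σ i) i) t := by
    intro σ
    exact HasDerivAt.fun_finsetProd (fun i _ => hasDerivAt_matrix.1 hA (σ i) i)
  have hdet : HasDerivAt (fun y => ∑ σ : Equiv.Perm (Fin q),
        (Equiv.Perm.sign σ : ℝ) * ∏ i, A y (σ i) i)
      (∑ σ : Equiv.Perm (Fin q), (Equiv.Perm.sign σ : ℝ) *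
        (∑ i, (∏ j ∈ Finset.univ.erase i, A t (σ j) j) • A' (σ i) i)) t :=
    HasDerivAt.fun_sum (fun σ _ => ((hσ σ).const_mul _))
  have hfun : (fun y => (A y).det) = (fun y => ∑ σ : Equiv.Perm (Fin q),
      (Equiv.Perm.sign σ : ℝ) * ∏ i, A y (σ i) i) := by
    funext y; exact Matrix.det_apply' (A y)
  rw [hfun]
  convert hdet using 1
  rw [Finset.sum_eq_single (1 : Equiv.Perm (Fin q))]
  · simp [h1, Matrix.trace, Matrix.diag, smul_smul]
  · intro σ _ hσ1
    have : ∀ i : Fin q, (∏ j ∈ Finset.univ.erase i, A t (σ j) j) = 0 := by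
      intro i
      obtain ⟨k, hk⟩ : ∃ k, σ k ≠ k := by
        by_contra hc
        push_neg at hc
        exact hσ1 (Equiv.ext hc)
      rcases eq_or_ne k i with rfl | hki
      · refine Finset.prod_eq_zero (Finset.mem_erase.2 ⟨hk, Finset.mem_univ _⟩) ?_
        rw [h1]
        have : σ (σ k) ≠ σ k := fun h => hk (σ.injective h)
        simp [Matrix.one_apply, this]
      · refine Finset.prod_eq_zero (Finset.mem_erase.2 ⟨hki, Finset.mem_univ _⟩) ?_
        rw [h1]
        simp [Matrix.one_apply, hk]
    simp [this]
  · simp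

lemma hasDerivAt_log_det {A : ℝ → Matrix (Fin q) (Fin q) ℝ} {A' : Matrix (Fin q) (Fin q) ℝ} {t : ℝ}
    (hA : HasDerivAt A A' t) (hu : IsUnit (A t)) :
    HasDerivAt (fun t => Real.log (A t).det) (((A t)⁻¹ * A').trace) t := by
  have hud : IsUnit (A t).det := (Matrix.isUnit_iff_isUnit_det _).1 hu
  have hdet0 : (A t).det ≠ 0 := hud.ne_zero
  have hB : HasDerivAt (fun x => (A t)⁻¹ * A x) ((A t)⁻¹ * A') t := by
    have := HasDerivAt.matMul (hasDerivAt_const t ((A t)⁻¹)) hA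
    simpa using this
  have hB1 : (A t)⁻¹ * A t = 1 := Matrix.nonsing_inv_mul _ hud
  have hD : HasDerivAt (fun x => ((A t)⁻¹ * A x).det) ((A t)⁻¹ * A').trace t :=
    hasDerivAt_det_one hB hB1
  have heq : (fun x => Real.log (A x).det) =
      fun x => Real.log ((A t).det * ((A t)⁻¹ * A x).det) := by
    funext x
    rw [← Matrix.det_mul, ← Matrix.mul_assoc, Matrix.mul_nonsing_inv _ hud, Matrix.one_mul]
  rw [heq]
  have hlog := ((hD.const_mul ((A t).det)).log (by rw [hB1]; simp [hdet0]))
  convert hlog using 1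
  rw [hB1, Matrix.det_one]
  field_simp

section twovar
variable {E : Type*} [NormedAddCommGroup E] [NormedSpace ℝ E]

lemma hasDerivAt_sec1 {F : ℝ × ℝ → E} (hF : ContDiff ℝ 2 F) (x y : ℝ) :
    HasDerivAt (fun x' => F (x', y)) (deriv (fun x' => F (x', y)) x) x := by
  have : DifferentiableAt ℝ (fun x' => F (x', y)) x := by
    apply DifferentiableAt.comp
    · exact (hF.differentiable (by norm_num)).differentiableAt
    · exact (differentiableAt_id.prodMk (differentiableAt_const y))
  exact this.hasDerivAt

lemma hasDerivAt_sec2 {F : ℝ × ℝ → E} (hF : ContDiff ℝ 2 F) (x y : ℝ) :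
    HasDerivAt (fun y' => F (x, y')) (deriv (fun y' => F (x, y')) y) y := by
  have : DifferentiableAt ℝ (fun y' => F (x, y')) y := by
    apply DifferentiableAt.comp
    · exact (hF.differentiable (by norm_num)).differentiableAt
    · exact ((differentiableAt_const x).prodMk differentiableAt_id)
  exact this.hasDerivAt

lemma hasDerivAt_mixed {F : ℝ × ℝ → E} (hF : ContDiff ℝ 2 F) (r s : ℝ) :
    HasDerivAt (fun x => deriv (fun y => F (x, y)) s)
      (deriv (fun x => deriv (fun y => F (x, y)) s) r) r := by
  have hfd : ∀ x, deriv (fun y => F (x, y)) s = fderiv ℝ F (x, s) (0, 1) := by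
    intro x
    have h1 : HasDerivAt (fun y => F (x, y)) (fderiv ℝ F (x, s) (0, 1)) s := by
      have hc : HasDerivAt (fun y => ((x, y) : ℝ × ℝ)) (0, 1) s :=
        ((hasDerivAt_const s x).prodMk (hasDerivAt_id s))
      exact ((hF.differentiable (by norm_num)).differentiableAt.hasFDerivAt.comp_hasDerivAt s hc)
    exact h1.deriv
  have heq : (fun x => deriv (fun y => F (x, y)) s) = fun x => fderiv ℝ F (x, s) (0, 1) :=
    funext hfd
  rw [heq]
  have h2 : ContDiff ℝ 1 (fderiv ℝ F) := hF.fderiv_right (by norm_num)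
  have h3 : DifferentiableAt ℝ (fun x => fderiv ℝ F (x, s)) r := by
    apply DifferentiableAt.comp
    · exact (h2.differentiable (by norm_num)).differentiableAt
    · exact (differentiableAt_id.prodMk (differentiableAt_const s))
  exact (h3.clm_apply (differentiableAt_const _)).hasDerivAt

end twovar

lemma trace_vecMulVec_mul (z w : Fin q → ℝ) (M : Matrix (Fin q) (Fin q) ℝ) :
    (Matrix.vecMulVec z w * M).trace = w ⬝ᵥ M *ᵥ z := by
  simp only [Matrix.trace, Matrix.diag, Matrix.mul_apply, Matrix.vecMulVec_apply,
    dotProduct, Matrix.mulVec, Finset.mul_sum]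
  rw [Finset.sum_comm]
  apply Finset.sum_congr rfl; intro k _
  apply Finset.sum_congr rfl; intro i _
  ring

lemma dot_symm {M : Matrix (Fin q) (Fin q) ℝ} (h : Mᵀ = M) (a b : Fin q → ℝ) :
    a ⬝ᵥ M *ᵥ b = b ⬝ᵥ M *ᵥ a := by
  rw [Matrix.dotProduct_mulVec, ← Matrix.mulVec_transpose, h, dotProduct_comm]

lemma dot_trans (M : Matrix (Fin q) (Fin q) ℝ) (a b : Fin q → ℝ) :
    (Mᵀ *ᵥ a) ⬝ᵥ b = a ⬝ᵥ (M *ᵥ b) := by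
  rw [Matrix.mulVec_transpose, ← Matrix.dotProduct_mulVec]

end EllAux

theorem stmt_15 (q : ℕ) (Y : Fin q → ℝ)
    (μ : ℝ → ℝ → (Fin q → ℝ)) (Sig : ℝ → ℝ → Matrix (Fin q) (Fin q) ℝ)
    (hμ : ContDiff ℝ 2 (fun p : ℝ × ℝ => μ p.1 p.2))
    (hSig : ContDiff ℝ 2 (fun p : ℝ × ℝ => Sig p.1 p.2))
    (hpd : ∀ r s, (Sig r s).PosDef)
    (g Wg : ℝ → ℝ) (hgpos : ∀ x, 0 < g x) (hg : ContDiff ℝ 2 g)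
    (hW : ∀ x, Wg x = deriv (fun t => Real.log (g t)) x)
    (ℓ : ℝ → ℝ → ℝ)
    (hℓ : ∀ r s, ℓ r s = -(1 / 2) * Real.log (Sig r s).det +
      Real.log (g ((Y - μ r s) ⬝ᵥ (Sig r s)⁻¹ *ᵥ (Y - μ r s))))
    (r s : ℝ)
    (S : Matrix (Fin q) (Fin q) ℝ) (hS : S = Sig r s)
    (z : Fin q → ℝ) (hzdef : z = Y - μ r s)
    (u v vd : ℝ) (hu : u = z ⬝ᵥ S⁻¹ *ᵥ z)
    (hv : v = -2 * Wg u) (hvd : vd = -2 * deriv Wg u)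
    (dr ds : Fin q → ℝ)
    (hdr : dr = deriv (fun x => μ x s) r) (hds : ds = deriv (fun y => μ r y) s)
    (Cr Cs : Matrix (Fin q) (Fin q) ℝ)
    (hCr : Cr = deriv (fun x => Sig x s) r) (hCs : Cs = deriv (fun y => Sig r y) s)
    (Ar As : Matrix (Fin q) (Fin q) ℝ)
    (hAr : Ar = -(S⁻¹ * Cr * S⁻¹)) (hAsm : As = -(S⁻¹ * Cs * S⁻¹))
    (Asr : Matrix (Fin q) (Fin q) ℝ)
    (hAsr : Asr =
      deriv (fun x => -((Sig x s)⁻¹ * deriv (fun y => Sig x y) s * (Sig x s)⁻¹)) r)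
    (dsr : Fin q → ℝ)
    (hdsr : dsr = deriv (fun x => deriv (fun y => μ x y) s) r)
    (T : Fin q → ℝ)
    (hT : T = (-vd * (z ⬝ᵥ Ar *ᵥ z)) • z + (2 * vd * (dr ⬝ᵥ S⁻¹ *ᵥ z)) • z +
      v • dr + v • ((S⁻¹ * Cr)ᵀ *ᵥ z))
    (B : Matrix (Fin q) (Fin q) ℝ)
    (hB : B = (-vd * (dr ⬝ᵥ S⁻¹ *ᵥ z)) • Matrix.vecMulVec z z +
      ((1 / 2) * vd * (z ⬝ᵥ Ar *ᵥ z)) • Matrix.vecMulVec z z -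
      v • Matrix.vecMulVec z dr - (1 / 2 : ℝ) • Cr)
    (E : ℝ)
    (hE : E = -(1 / 2) * Matrix.trace (Asr * (S - v • Matrix.vecMulVec z z)) -
      v * (z ⬝ᵥ S⁻¹ *ᵥ dsr)) :
    -(deriv (fun x => deriv (fun y => ℓ x y) s) r) =
      T ⬝ᵥ S⁻¹ *ᵥ ds + Matrix.trace (B * As) + E := by
  classical
  have hunit : ∀ x y, IsUnit (Sig x y) := fun x y => (hpd x y).isUnit
  have hsym : ∀ x y, (Sig x y)ᵀ = Sig x y := fun x y => by
    rw [← Matrix.conjTranspose_eq_transpose_of_trivial]; exact (hpd x y).1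
  have hgd : Differentiable ℝ g := hg.differentiable (by norm_num)
  have hWval : ∀ t, Wg t = deriv g t / g t := by
    intro t
    rw [hW]
    exact (((hgd t).hasDerivAt).log (hgpos t).ne').deriv
  have hderivg : ContDiff ℝ 1 (deriv g) := by
    have h2 : ContDiff ℝ (1 + 1 : ℕ) g := by exact_mod_cast hg
    exact (contDiff_succ_iff_deriv.mp (by exact_mod_cast h2)).2.2
  have hWdiff : Differentiable ℝ Wg := by
    rw [show Wg = fun t => deriv g t / g t from funext hWval]
    exact (hderivg.differentiable (by norm_num)).div hgd (fun t => (hgpos t).ne')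
  have hSy : ∀ x, HasDerivAt (fun y => Sig x y) (deriv (fun y => Sig x y) s) s :=
    fun x => EllAux.hasDerivAt_sec2 hSig x s
  have hμy : ∀ x, HasDerivAt (fun y => μ x y) (deriv (fun y => μ x y) s) s :=
    fun x => EllAux.hasDerivAt_sec2 hμ x s
  -- inner derivative formula
  have key1 : ∀ x, deriv (fun y => ℓ x y) s =
      -(1/2) * ((Sig x s)⁻¹ * deriv (fun y => Sig x y) s).trace +
      Wg ((Y - μ x s) ⬝ᵥ (Sig x s)⁻¹ *ᵥ (Y - μ x s)) *
        ((-(deriv (fun y => μ x y) s)) ⬝ᵥ ((Sig x s)⁻¹ *ᵥ (Y - μ x s)) +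
         (Y - μ x s) ⬝ᵥ ((-((Sig x s)⁻¹ * deriv (fun y => Sig x y) s * (Sig x s)⁻¹)) *ᵥ (Y - μ x s) +
           (Sig x s)⁻¹ *ᵥ (-(deriv (fun y => μ x y) s)))) := by
    intro x
    have hz : HasDerivAt (fun y => Y - μ x y) (-(deriv (fun y => μ x y) s)) s :=
      (hμy x).const_sub Y
    have hinv : HasDerivAt (fun y => (Sig x y)⁻¹)
        (-((Sig x s)⁻¹ * deriv (fun y => Sig x y) s * (Sig x s)⁻¹)) s :=
      EllAux.hasDerivAt_inv_mat (hSy x) (hunit x s)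
    have hQ : HasDerivAt (fun y => (Y - μ x y) ⬝ᵥ (Sig x y)⁻¹ *ᵥ (Y - μ x y))
        ((-(deriv (fun y => μ x y) s)) ⬝ᵥ ((Sig x s)⁻¹ *ᵥ (Y - μ x s)) +
         (Y - μ x s) ⬝ᵥ ((-((Sig x s)⁻¹ * deriv (fun y => Sig x y) s * (Sig x s)⁻¹)) *ᵥ (Y - μ x s) +
           (Sig x s)⁻¹ *ᵥ (-(deriv (fun y => μ x y) s)))) s :=
      EllAux.HasDerivAt.dotProd hz (EllAux.HasDerivAt.mulVecd hinv hz)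
    have hgQ : HasDerivAt (fun y => g ((Y - μ x y) ⬝ᵥ (Sig x y)⁻¹ *ᵥ (Y - μ x y)))
        (deriv g ((Y - μ x s) ⬝ᵥ (Sig x s)⁻¹ *ᵥ (Y - μ x s)) *
          ((-(deriv (fun y => μ x y) s)) ⬝ᵥ ((Sig x s)⁻¹ *ᵥ (Y - μ x s)) +
           (Y - μ x s) ⬝ᵥ ((-((Sig x s)⁻¹ * deriv (fun y => Sig x y) s * (Sig x s)⁻¹)) *ᵥ (Y - μ x s) +
             (Sig x s)⁻¹ *ᵥ (-(deriv (fun y => μ x y) s))))) s :=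
      HasDerivAt.comp s ((hgd _).hasDerivAt) hQ
    have hlog := hgQ.log (hgpos _).ne'
    have hld := EllAux.hasDerivAt_log_det (hSy x) (hunit x s)
    have hsum := (hld.const_mul (-(1/2) : ℝ)).fun_add hlog
    have hfn : (fun y => ℓ x y) = fun y => -(1/2) * Real.log (Sig x y).det +
        Real.log (g ((Y - μ x y) ⬝ᵥ (Sig x y)⁻¹ *ᵥ (Y - μ x y))) := by
      funext y; exact_mod_cast hℓ x y
    rw [hfn, hsum.deriv, hWval]
    have hgne : g ((Y - μ x s) ⬝ᵥ (Sig x s)⁻¹ *ᵥ (Y - μ x s)) ≠ 0 := (hgpos _).ne'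
    field_simp
  -- outer components
  have hSx : HasDerivAt (fun x => Sig x s) Cr r := by
    rw [hCr]; exact EllAux.hasDerivAt_sec1 hSig r s
  have hinvx : HasDerivAt (fun x => (Sig x s)⁻¹) Ar r := by
    rw [hAr, hS]
    exact EllAux.hasDerivAt_inv_mat hSx (hunit r s)
  have hCx : HasDerivAt (fun x => deriv (fun y => Sig x y) s)
      (deriv (fun x => deriv (fun y => Sig x y) s) r) r := EllAux.hasDerivAt_mixed hSig r s
  set Csr := deriv (fun x => deriv (fun y => Sig x y) s) r with hCsr
  have hdfx : HasDerivAt (fun x => deriv (fun y => μ x y) s) dsr r := by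
    rw [hdsr]; exact EllAux.hasDerivAt_mixed hμ r s
  have hzx : HasDerivAt (fun x => Y - μ x s) (-dr) r := by
    rw [hdr]; exact (EllAux.hasDerivAt_sec1 hμ r s).const_sub Y
  have h1 : HasDerivAt (fun x => (Sig x s)⁻¹ * deriv (fun y => Sig x y) s)
      (Ar * Cs + S⁻¹ * Csr) r := by
    simpa only [← hS, ← hCs] using EllAux.HasDerivAt.matMul hinvx hCx
  have hAmx : HasDerivAt (fun x => -((Sig x s)⁻¹ * deriv (fun y => Sig x y) s * (Sig x s)⁻¹))
      (-((Ar * Cs + S⁻¹ * Csr) * S⁻¹ + (S⁻¹ * Cs) * Ar)) r := by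
    have hneg := (EllAux.HasDerivAt.matMul h1 hinvx).fun_neg
    simp only [← hS, ← hCs] at hneg
    exact hneg
  have hAsrval : Asr = -((Ar * Cs + S⁻¹ * Csr) * S⁻¹ + (S⁻¹ * Cs) * Ar) := by
    rw [hAsr]; exact hAmx.deriv
  have hupt : (Y - μ r s) ⬝ᵥ (Sig r s)⁻¹ *ᵥ (Y - μ r s) = u := by rw [hu, hzdef, hS]
  have hUx : HasDerivAt (fun x => (Y - μ x s) ⬝ᵥ (Sig x s)⁻¹ *ᵥ (Y - μ x s))
      ((-dr) ⬝ᵥ (S⁻¹ *ᵥ z) + z ⬝ᵥ (Ar *ᵥ z + S⁻¹ *ᵥ (-dr))) r := by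
    simpa only [← hS, ← hzdef] using
      EllAux.HasDerivAt.dotProd hzx (EllAux.HasDerivAt.mulVecd hinvx hzx)
  have hWgU : HasDerivAt (fun x => Wg ((Y - μ x s) ⬝ᵥ (Sig x s)⁻¹ *ᵥ (Y - μ x s)))
      (deriv Wg u * ((-dr) ⬝ᵥ (S⁻¹ *ᵥ z) + z ⬝ᵥ (Ar *ᵥ z + S⁻¹ *ᵥ (-dr)))) r := by
    have hW0 : HasDerivAt Wg (deriv Wg u) ((Y - μ r s) ⬝ᵥ (Sig r s)⁻¹ *ᵥ (Y - μ r s)) := by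
      rw [hupt]; exact (hWdiff u).hasDerivAt
    exact HasDerivAt.comp r hW0 hUx
  have htrx : HasDerivAt (fun x => ((Sig x s)⁻¹ * deriv (fun y => Sig x y) s).trace)
      ((Ar * Cs + S⁻¹ * Csr).trace) r := EllAux.HasDerivAt.traced h1
  have hq1 : HasDerivAt (fun x => (-(deriv (fun y => μ x y) s)) ⬝ᵥ ((Sig x s)⁻¹ *ᵥ (Y - μ x s)))
      ((-dsr) ⬝ᵥ (S⁻¹ *ᵥ z) + (-ds) ⬝ᵥ (Ar *ᵥ z + S⁻¹ *ᵥ (-dr))) r := by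
    simpa only [← hS, ← hzdef, ← hds] using
      EllAux.HasDerivAt.dotProd hdfx.fun_neg (EllAux.HasDerivAt.mulVecd hinvx hzx)
  have hq2 : HasDerivAt (fun x => (Y - μ x s) ⬝ᵥ
      ((-((Sig x s)⁻¹ * deriv (fun y => Sig x y) s * (Sig x s)⁻¹)) *ᵥ (Y - μ x s) +
        (Sig x s)⁻¹ *ᵥ (-(deriv (fun y => μ x y) s))))
      ((-dr) ⬝ᵥ (As *ᵥ z + S⁻¹ *ᵥ (-ds)) +
        z ⬝ᵥ ((-((Ar * Cs + S⁻¹ * Csr) * S⁻¹ + (S⁻¹ * Cs) * Ar) *ᵥ z + As *ᵥ (-dr)) +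
          (Ar *ᵥ (-ds) + S⁻¹ *ᵥ (-dsr)))) r := by
    have hbig := EllAux.HasDerivAt.dotProd hzx
      ((EllAux.HasDerivAt.mulVecd hAmx hzx).fun_add (EllAux.HasDerivAt.mulVecd hinvx hdfx.fun_neg))
    simpa only [← hS, ← hCs, ← hzdef, ← hds, ← hAsm] using hbig
  have hφ : HasDerivAt (fun x =>
      -(1/2) * ((Sig x s)⁻¹ * deriv (fun y => Sig x y) s).trace +
      Wg ((Y - μ x s) ⬝ᵥ (Sig x s)⁻¹ *ᵥ (Y - μ x s)) *
        ((-(deriv (fun y => μ x y) s)) ⬝ᵥ ((Sig x s)⁻¹ *ᵥ (Y - μ x s)) +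
         (Y - μ x s) ⬝ᵥ ((-((Sig x s)⁻¹ * deriv (fun y => Sig x y) s * (Sig x s)⁻¹)) *ᵥ (Y - μ x s) +
           (Sig x s)⁻¹ *ᵥ (-(deriv (fun y => μ x y) s)))))
      (-(1/2) * ((Ar * Cs + S⁻¹ * Csr).trace) +
        ((deriv Wg u * ((-dr) ⬝ᵥ (S⁻¹ *ᵥ z) + z ⬝ᵥ (Ar *ᵥ z + S⁻¹ *ᵥ (-dr)))) *
            ((-ds) ⬝ᵥ (S⁻¹ *ᵥ z) + z ⬝ᵥ (As *ᵥ z + S⁻¹ *ᵥ (-ds))) +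
          Wg u *
            (((-dsr) ⬝ᵥ (S⁻¹ *ᵥ z) + (-ds) ⬝ᵥ (Ar *ᵥ z + S⁻¹ *ᵥ (-dr))) +
             ((-dr) ⬝ᵥ (As *ᵥ z + S⁻¹ *ᵥ (-ds)) +
               z ⬝ᵥ ((-((Ar * Cs + S⁻¹ * Csr) * S⁻¹ + (S⁻¹ * Cs) * Ar) *ᵥ z + As *ᵥ (-dr)) +
                 (Ar *ᵥ (-ds) + S⁻¹ *ᵥ (-dsr))))))) r := by
    have hmul := hWgU.fun_mul (hq1.fun_add hq2)
    have hadd := (htrx.const_mul (-(1/2) : ℝ)).fun_add hmul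
    simpa only [← hS, ← hzdef, ← hds, ← hCs, ← hAsm, ← hu] using hadd
  have hfeq : (fun x => deriv (fun y => ℓ x y) s) = (fun x =>
      -(1/2) * ((Sig x s)⁻¹ * deriv (fun y => Sig x y) s).trace +
      Wg ((Y - μ x s) ⬝ᵥ (Sig x s)⁻¹ *ᵥ (Y - μ x s)) *
        ((-(deriv (fun y => μ x y) s)) ⬝ᵥ ((Sig x s)⁻¹ *ᵥ (Y - μ x s)) +
         (Y - μ x s) ⬝ᵥ ((-((Sig x s)⁻¹ * deriv (fun y => Sig x y) s * (Sig x s)⁻¹)) *ᵥ (Y - μ x s) +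
           (Sig x s)⁻¹ *ᵥ (-(deriv (fun y => μ x y) s))))) := funext key1
  rw [hfeq, hφ.deriv]
  -- symmetry and trace facts
  have hdetu : IsUnit S.det := by
    rw [hS]; exact (Matrix.isUnit_iff_isUnit_det _).1 (hunit r s)
  have hST : Sᵀ = S := by rw [hS]; exact hsym r s
  have hSinvT : S⁻¹ᵀ = S⁻¹ := by rw [Matrix.transpose_nonsing_inv, hST]
  have hCrT : Crᵀ = Cr := by
    ext i j
    have e1 : HasDerivAt (fun x => Sig x s i j) (Cr i j) r := EllAux.hasDerivAt_matrix.1 hSx i j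
    have e2 : HasDerivAt (fun x => Sig x s j i) (Cr j i) r := EllAux.hasDerivAt_matrix.1 hSx j i
    have hfe : (fun x => Sig x s j i) = (fun x => Sig x s i j) := by
      funext x
      exact congrFun (congrFun (hsym x s) i) j
    rw [hfe] at e2
    simpa using e2.unique e1
  have hSyr : HasDerivAt (fun y => Sig r y) Cs s := by rw [hCs]; exact hSy r
  have hCsT : Csᵀ = Cs := by
    ext i j
    have e1 : HasDerivAt (fun y => Sig r y i j) (Cs i j) s := EllAux.hasDerivAt_matrix.1 hSyr i j
    have e2 : HasDerivAt (fun y => Sig r y j i) (Cs j i) s := EllAux.hasDerivAt_matrix.1 hSyr j i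
    have hfe : (fun y => Sig r y j i) = (fun y => Sig r y i j) := by
      funext y
      exact congrFun (congrFun (hsym r y) i) j
    rw [hfe] at e2
    simpa using e2.unique e1
  have hArT : Arᵀ = Ar := by
    rw [hAr]
    simp [Matrix.transpose_mul, hSinvT, hCrT, Matrix.mul_assoc]
  have hAsT : Asᵀ = As := by
    rw [hAsm]
    simp [Matrix.transpose_mul, hSinvT, hCsT, Matrix.mul_assoc]
  have H1 : z ⬝ᵥ S⁻¹ *ᵥ dr = dr ⬝ᵥ S⁻¹ *ᵥ z := EllAux.dot_symm hSinvT z dr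
  have H2 : z ⬝ᵥ S⁻¹ *ᵥ ds = ds ⬝ᵥ S⁻¹ *ᵥ z := EllAux.dot_symm hSinvT z ds
  have H3 : z ⬝ᵥ As *ᵥ dr = dr ⬝ᵥ As *ᵥ z := EllAux.dot_symm hAsT z dr
  have H4 : ds ⬝ᵥ Ar *ᵥ z = z ⬝ᵥ Ar *ᵥ ds := EllAux.dot_symm hArT ds z
  have H5 : dsr ⬝ᵥ S⁻¹ *ᵥ z = z ⬝ᵥ S⁻¹ *ᵥ dsr := EllAux.dot_symm hSinvT dsr z
  have H6 : ((S⁻¹ * Cr)ᵀ *ᵥ z) ⬝ᵥ (S⁻¹ *ᵥ ds) = -(z ⬝ᵥ Ar *ᵥ ds) := by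
    rw [EllAux.dot_trans, Matrix.mulVec_mulVec]
    rw [show S⁻¹ * Cr * S⁻¹ = -Ar by rw [hAr, neg_neg], Matrix.neg_mulVec,
      dotProduct_neg]
  have H7 : (Cr * As).trace = (Ar * Cs).trace := by
    rw [hAsm, hAr]
    have e1 : Cr * -(S⁻¹ * Cs * S⁻¹) = -(Cr * S⁻¹ * Cs * S⁻¹) := by noncomm_ring
    have e2 : -(S⁻¹ * Cr * S⁻¹) * Cs = -(S⁻¹ * (Cr * S⁻¹ * Cs)) := by noncomm_ring
    rw [e1, e2, Matrix.trace_neg, Matrix.trace_neg, Matrix.trace_mul_comm]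
  have H8 : (Asr * S).trace = -(2 * (Ar * Cs).trace + (S⁻¹ * Csr).trace) := by
    rw [hAsrval]
    have e1 : -((Ar * Cs + S⁻¹ * Csr) * S⁻¹ + S⁻¹ * Cs * Ar) * S
        = -((Ar * Cs) * (S⁻¹ * S)) - (S⁻¹ * Csr) * (S⁻¹ * S) - S⁻¹ * (Cs * (Ar * S)) := by
      noncomm_ring
    rw [e1, Matrix.nonsing_inv_mul _ hdetu, Matrix.mul_one, Matrix.mul_one,
      Matrix.trace_sub, Matrix.trace_sub, Matrix.trace_neg]
    have e2 : (S⁻¹ * (Cs * (Ar * S))).trace = (Ar * Cs).trace := by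
      rw [Matrix.trace_mul_comm]
      have e3 : Cs * (Ar * S) * S⁻¹ = Cs * Ar * (S * S⁻¹) := by noncomm_ring
      rw [e3, Matrix.mul_nonsing_inv _ hdetu, Matrix.mul_one, Matrix.trace_mul_comm]
    rw [e2]; ring
  have H9 : (Asr * Matrix.vecMulVec z z).trace = z ⬝ᵥ Asr *ᵥ z := by
    rw [Matrix.trace_mul_comm, EllAux.trace_vecMulVec_mul]
  have H10 : (Matrix.vecMulVec z z * As).trace = z ⬝ᵥ As *ᵥ z :=
    EllAux.trace_vecMulVec_mul z z As
  have H11 : (Matrix.vecMulVec z dr * As).trace = dr ⬝ᵥ As *ᵥ z :=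
    EllAux.trace_vecMulVec_mul z dr As
  rw [← hAsrval, hT, hB, hE, hv, hvd]
  simp only [add_dotProduct, smul_dotProduct, neg_dotProduct,
    dotProduct_add, dotProduct_neg, dotProduct_smul,
    Matrix.mulVec_neg, smul_eq_mul, sub_mul, Matrix.add_mul, smul_mul_assoc,
    Matrix.trace_add, Matrix.trace_sub, Matrix.trace_smul, Matrix.mul_sub, Matrix.mul_smul,
    Matrix.trace_neg, neg_mul, mul_neg, H6, H9, H10, H11]
  have H12 : ds ⬝ᵥ S⁻¹ *ᵥ dr = dr ⬝ᵥ S⁻¹ *ᵥ ds := EllAux.dot_symm hSinvT ds dr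
  rw [H1, H2, H3, H4, H5, H7, H8, H12]
  ring
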